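/- Suppose there is a basis (e_1, …, e_m) of ℝ^m such that for every t ∈ {1, …, m} there exists an m×d matrix X^{(t)} with p(X^{(t)}) > 0, rank(X^{(t)}) = d, and X^{(t)ᵀ} ·ᵥ e_t = 0. Then the matrix ℳ := ∫ M(X) dν(X) is invertible. (Invertibility of the conditional expectation matrix ℳ(V) under the high-level support condition.) -/

import Mathlib

open MeasureTheory Matrix

section AuxProj

variable {n : Type*} [Fintype n] [DecidableEq n]

/-- Entries of a real symmetric idempotent matrix are bounded by 1. -/
lemma symIdem_entry_abs_le_one {M : Matrix n n ℝ} (hsym : Mᵀ = M) (hidem : M * M = M)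
    (i j : n) : |M i j| ≤ 1 := by
  have hdiag : ∀ a, M a a = ∑ k, M a k * M a k := by
    intro a
    conv_lhs => rw [← hidem]
    rw [Matrix.mul_apply]
    refine Finset.sum_congr rfl fun k _ => ?_
    rw [show M k a = M a k from congrFun (congrFun hsym a) k]
  have h1 : M i j * M i j ≤ M i i := by
    rw [hdiag i]
    exact Finset.single_le_sum (f := fun k => M i k * M i k)
      (fun k _ => mul_self_nonneg _) (Finset.mem_univ j)
  have h2 : M i i * M i i ≤ M i i := by
    conv_rhs => rw [hdiag i]
    exact Finset.single_le_sum (f := fun k => M i k * M i k)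
      (fun k _ => mul_self_nonneg _) (Finset.mem_univ i)
  rw [abs_le_one_iff_mul_self_le_one]
  nlinarith

lemma symIdem_quadform {M : Matrix n n ℝ} (hsym : Mᵀ = M) (hidem : M * M = M)
    (v : n → ℝ) : v ⬝ᵥ (M *ᵥ v) = (M *ᵥ v) ⬝ᵥ (M *ᵥ v) := by
  calc v ⬝ᵥ (M *ᵥ v) = v ⬝ᵥ ((Mᵀ * M) *ᵥ v) := by rw [hsym, hidem]
    _ = v ⬝ᵥ (Mᵀ *ᵥ (M *ᵥ v)) := by rw [Matrix.mulVec_mulVec]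
    _ = (v ᵥ* Mᵀ) ⬝ᵥ (M *ᵥ v) := Matrix.dotProduct_mulVec _ _ _
    _ = (M *ᵥ v) ⬝ᵥ (M *ᵥ v) := by rw [Matrix.vecMul_transpose]

variable {m' : Type*} [Fintype m'] [DecidableEq m']

lemma projMat_transpose (X : Matrix m' n ℝ) :
    (1 - X * (Xᵀ * X)⁻¹ * Xᵀ)ᵀ = 1 - X * (Xᵀ * X)⁻¹ * Xᵀ := by
  have h : ((Xᵀ * X)⁻¹)ᵀ = (Xᵀ * X)⁻¹ := by
    rw [Matrix.transpose_nonsing_inv, Matrix.transpose_mul, Matrix.transpose_transpose]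
  rw [Matrix.transpose_sub, Matrix.transpose_one, Matrix.transpose_mul, Matrix.transpose_mul,
    Matrix.transpose_transpose, h, Matrix.mul_assoc]

lemma projMat_idem (X : Matrix m' n ℝ) :
    (1 - X * (Xᵀ * X)⁻¹ * Xᵀ) * (1 - X * (Xᵀ * X)⁻¹ * Xᵀ)
      = 1 - X * (Xᵀ * X)⁻¹ * Xᵀ := by
  by_cases h : IsUnit (Xᵀ * X).det
  · have hP : (X * (Xᵀ * X)⁻¹ * Xᵀ) * (X * (Xᵀ * X)⁻¹ * Xᵀ) = X * (Xᵀ * X)⁻¹ * Xᵀ := by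
      calc (X * (Xᵀ * X)⁻¹ * Xᵀ) * (X * (Xᵀ * X)⁻¹ * Xᵀ)
          = X * ((Xᵀ * X)⁻¹ * (Xᵀ * X)) * ((Xᵀ * X)⁻¹ * Xᵀ) := by
            simp only [Matrix.mul_assoc]
        _ = X * (Xᵀ * X)⁻¹ * Xᵀ := by
            rw [Matrix.nonsing_inv_mul _ h, Matrix.mul_one, Matrix.mul_assoc]
    simp only [sub_mul, mul_sub, one_mul, mul_one, hP]
    abel
  · rw [Matrix.nonsing_inv_apply_not_isUnit _ h, Matrix.mul_zero, Matrix.zero_mul, sub_zero,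
      one_mul]

/-- A matrix with full column rank has invertible Gram matrix. -/
lemma isUnit_gram_of_rank {m d : ℕ} (X : Matrix (Fin m) (Fin d) ℝ) (h : X.rank = d) :
    IsUnit (Xᵀ * X) := by
  have h1 : (Xᵀ * X).rank = d := by rw [Matrix.rank_transpose_mul_self, h]
  rw [← Matrix.mulVec_surjective_iff_isUnit]
  have hrange : LinearMap.range (Xᵀ * X).mulVecLin = ⊤ := by
    apply Submodule.eq_top_of_finrank_eq
    rw [show Module.finrank ℝ (LinearMap.range (Xᵀ * X).mulVecLin) = (Xᵀ * X).rank from rfl, h1,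
      Module.finrank_fintype_fun_eq_card, Fintype.card_fin]
  intro w
  obtain ⟨u, hu⟩ := (LinearMap.range_eq_top.mp hrange) w
  exact ⟨u, hu⟩

end AuxProj

/-- `M(X) = I - X (XᵀX)⁻¹ Xᵀ`. -/
noncomputable def projMatOf (m d : ℕ) (X : Fin m → Fin d → ℝ) : Matrix (Fin m) (Fin m) ℝ :=
  (1 : Matrix (Fin m) (Fin m) ℝ)
    - Matrix.of X * ((Matrix.of X)ᵀ * Matrix.of X)⁻¹ * (Matrix.of X)ᵀ

/-- Invertibility of the conditional expectation matrix `ℳ(V) = ∫ M(X) dν(X)` under the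
high-level support condition (Result 2 / Assumption 4 of the paper): `ν` has a continuous
density `p` with respect to Lebesgue measure, and there is a basis `(e_t)` of `ℝ^m` such
that for every `t` some matrix `X⁽ᵗ⁾` with `p(X⁽ᵗ⁾) > 0` has full column rank and columns
orthogonal to `e_t`. -/
theorem integral_projection_matrix_invertible_of_support_condition
    (m d : ℕ) (hd : 0 < d) (hdm : d < m)
    (p : (Fin m → Fin d → ℝ) → ℝ) (hp_cont : Continuous p) (hp_nonneg : ∀ X, 0 ≤ p X)
    (ν : Measure (Fin m → Fin d → ℝ))
    (hν : ν = volume.withDensity fun X => ENNReal.ofReal (p X))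
    (hνprob : IsProbabilityMeasure ν)
    (e : Module.Basis (Fin m) ℝ (Fin m → ℝ))
    (he : ∀ t : Fin m, ∃ X : Fin m → Fin d → ℝ,
      0 < p X ∧ (Matrix.of X).rank = d ∧ (Matrix.of X)ᵀ *ᵥ e t = 0) :
    IsUnit (Matrix.of fun i j =>
      ∫ X, ((1 : Matrix (Fin m) (Fin m) ℝ)
        - Matrix.of X * ((Matrix.of X)ᵀ * Matrix.of X)⁻¹ * (Matrix.of X)ᵀ) i j ∂ν) := by
  classical
  show IsUnit (Matrix.of fun i j => ∫ X, projMatOf m d X i j ∂ν)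
  set Mx := projMatOf m d with hMxdef
  have hMx : ∀ X, Mx X = (1 : Matrix (Fin m) (Fin m) ℝ)
      - Matrix.of X * ((Matrix.of X)ᵀ * Matrix.of X)⁻¹ * (Matrix.of X)ᵀ := fun _ => rfl
  have hsym : ∀ X, (Mx X)ᵀ = Mx X := fun X => projMat_transpose _
  have hidem : ∀ X, Mx X * Mx X = Mx X := fun X => projMat_idem _
  have hbound : ∀ X i j, |Mx X i j| ≤ 1 := fun X => symIdem_entry_abs_le_one (hsym X) (hidem X)
  -- continuity facts
  have hidc : Continuous fun X : Fin m → Fin d → ℝ => Matrix.of X :=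
    continuous_matrix fun i j => (continuous_apply j).comp (continuous_apply i)
  have hgram : Continuous fun X : Fin m → Fin d → ℝ => (Matrix.of X)ᵀ * Matrix.of X :=
    (hidc.matrix_transpose).matrix_mul hidc
  have hdetc : Continuous fun X : Fin m → Fin d → ℝ => ((Matrix.of X)ᵀ * Matrix.of X).det :=
    hgram.matrix_det
  have hadjc : ∀ k l, Continuous fun X : Fin m → Fin d → ℝ =>
      ((Matrix.of X)ᵀ * Matrix.of X).adjugate k l :=
    fun k l => (hgram.matrix_adjugate).matrix_elem k l
  have hinv_eq : ∀ (X : Fin m → Fin d → ℝ) k l,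
      ((Matrix.of X)ᵀ * Matrix.of X)⁻¹ k l
        = (((Matrix.of X)ᵀ * Matrix.of X).det)⁻¹
            * ((Matrix.of X)ᵀ * Matrix.of X).adjugate k l := by
    intro X k l
    rw [Matrix.inv_def, Matrix.smul_apply, Ring.inverse_eq_inv', smul_eq_mul]
  -- measurability of entries
  have hinv_meas : ∀ k l, Measurable fun X : Fin m → Fin d → ℝ =>
      ((Matrix.of X)ᵀ * Matrix.of X)⁻¹ k l := by
    intro k l
    simp only [hinv_eq]
    exact (hdetc.measurable.inv).mul (hadjc k l).measurable
  have hentry_eq : ∀ (X : Fin m → Fin d → ℝ) i j, Mx X i j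
      = (1 : Matrix (Fin m) (Fin m) ℝ) i j
        - ∑ l, (∑ k, X i k * ((Matrix.of X)ᵀ * Matrix.of X)⁻¹ k l) * X j l := by
    intro X i j
    rw [hMx]
    simp [Matrix.sub_apply, Matrix.mul_apply, Matrix.transpose_apply]
  have hM_meas : ∀ i j, Measurable fun X => Mx X i j := by
    intro i j
    simp only [hentry_eq]
    refine measurable_const.sub (Finset.measurable_sum _ fun l _ => ?_)
    refine Measurable.mul (Finset.measurable_sum _ fun k _ => ?_)
      ((measurable_pi_apply l).comp (measurable_pi_apply j))
    exact Measurable.mul (f := fun X : Fin m → Fin d → ℝ => X i k)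
      (g := fun X : Fin m → Fin d → ℝ => ((Matrix.of X)ᵀ * Matrix.of X)⁻¹ k l)
      ((measurable_pi_apply k).comp (measurable_pi_apply i)) (hinv_meas k l)
  -- continuity of entries on the nonsingular set
  set S : Set (Fin m → Fin d → ℝ) :=
    {X | ((Matrix.of X)ᵀ * Matrix.of X).det ≠ 0} with hSdef
  have hM_contOn : ∀ i j, ContinuousOn (fun X => Mx X i j) S := by
    intro i j
    simp only [hentry_eq, hinv_eq]
    refine continuousOn_const.sub (continuousOn_finset_sum _ fun l _ => ?_)
    refine ContinuousOn.mul (continuousOn_finset_sum _ fun k _ => ?_)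
      (((continuous_apply l).comp (continuous_apply j)).continuousOn)
    exact ContinuousOn.mul (f := fun X : Fin m → Fin d → ℝ => X i k)
      (g := fun X : Fin m → Fin d → ℝ => ((Matrix.of X)ᵀ * Matrix.of X).det⁻¹
        * ((Matrix.of X)ᵀ * Matrix.of X).adjugate k l)
      (((continuous_apply k).comp (continuous_apply i)).continuousOn)
      ((hdetc.continuousOn.inv₀ fun X hX => hX).mul (hadjc k l).continuousOn)
  -- integrability
  haveI : IsFiniteMeasure ν := inferInstance
  have hInt : ∀ i j, Integrable (fun X => Mx X i j) ν := by
    intro i j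
    refine (integrable_const (1 : ℝ)).mono' ((hM_meas i j).aestronglyMeasurable) ?_
    exact Filter.Eventually.of_forall fun X => by
      rw [Real.norm_eq_abs]; exact hbound X i j
  -- the integral matrix and its quadratic form
  set A : Matrix (Fin m) (Fin m) ℝ := Matrix.of fun i j => ∫ X, Mx X i j ∂ν with hAdef
  have hAentry : ∀ i j, A i j = ∫ X, Mx X i j ∂ν := fun _ _ => rfl
  have hquad_eq : ∀ (N : Matrix (Fin m) (Fin m) ℝ) (w : Fin m → ℝ),
      w ⬝ᵥ (N *ᵥ w) = ∑ i, ∑ j, w i * (N i j * w j) := by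
    intro N w
    simp [dotProduct, Matrix.mulVec, Finset.mul_sum]
  have hQ : ∀ w : Fin m → ℝ, w ⬝ᵥ (A *ᵥ w) = ∫ X, w ⬝ᵥ (Mx X *ᵥ w) ∂ν := by
    intro w
    have hint1 : ∀ i j, Integrable (fun X => w i * (Mx X i j * w j)) ν :=
      fun i j => ((hInt i j).mul_const (w j)).const_mul (w i)
    rw [hquad_eq]
    simp only [hquad_eq]
    rw [integral_finset_sum _ (fun i _ => integrable_finset_sum _ (fun j _ => hint1 i j))]
    refine Finset.sum_congr rfl fun i _ => ?_
    rw [integral_finset_sum _ (fun j _ => hint1 i j)]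
    refine Finset.sum_congr rfl fun j _ => ?_
    rw [integral_const_mul, integral_mul_const, ← hAentry]
  have hf_nonneg : ∀ (w : Fin m → ℝ) X, 0 ≤ w ⬝ᵥ (Mx X *ᵥ w) := by
    intro w X
    rw [symIdem_quadform (hsym X) (hidem X)]
    exact Finset.sum_nonneg fun i _ => mul_self_nonneg _
  -- A is positive definite
  have hPD : A.PosDef := by
    rw [Matrix.posDef_iff_dotProduct_mulVec]
    constructor
    · -- Hermitian
      show Aᴴ = A
      ext i j
      rw [Matrix.conjTranspose_apply, star_trivial, hAentry, hAentry]
      exact integral_congr_ae (Filter.Eventually.of_forall fun X =>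
        (congrFun (congrFun (hsym X) j) i).symm)
    · intro v hv
      rw [star_trivial, hQ v]
      rcases lt_or_eq_of_le (integral_nonneg (f := fun X => v ⬝ᵥ (Mx X *ᵥ v)) (fun X => hf_nonneg v X)) with h | h
      · exact h
      exfalso
      -- the quadratic form vanishes ν-a.e.
      have hf_meas : Measurable fun X => v ⬝ᵥ (Mx X *ᵥ v) := by
        have : (fun X => v ⬝ᵥ (Mx X *ᵥ v))
            = fun X => ∑ i, v i * ∑ j, Mx X i j * v j := rfl
        rw [this]
        exact Finset.measurable_sum _ fun i _ => measurable_const.mul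
          (Finset.measurable_sum _ fun j _ => (hM_meas i j).mul measurable_const)
      have hInt_f : Integrable (fun X => v ⬝ᵥ (Mx X *ᵥ v)) ν := by
        have : (fun X => v ⬝ᵥ (Mx X *ᵥ v))
            = fun X => ∑ i, v i * ∑ j, Mx X i j * v j := rfl
        rw [this]
        exact integrable_finset_sum _ fun i _ => Integrable.const_mul
          (integrable_finset_sum _ fun j _ => (hInt i j).mul_const (v j)) (v i)
      have hzero : (fun X => v ⬝ᵥ (Mx X *ᵥ v)) =ᵐ[ν] 0 :=
        (integral_eq_zero_iff_of_nonneg (fun X => hf_nonneg v X) hInt_f).mp h.symm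
      have hdens_meas : Measurable fun X => ENNReal.ofReal (p X) :=
        ENNReal.measurable_ofReal.comp hp_cont.measurable
      have hae : ∀ᵐ X ∂(volume : Measure (Fin m → Fin d → ℝ)),
          ENNReal.ofReal (p X) ≠ 0 → v ⬝ᵥ (Mx X *ᵥ v) = 0 := by
        have := hzero
        rw [hν] at this
        exact (ae_withDensity_iff hdens_meas).mp this
      -- pick any t; show `e t ⬝ᵥ v = 0`
      have het : ∀ t : Fin m, e t ⬝ᵥ v = 0 := by
        intro t
        obtain ⟨X₀, hpX₀, hrank₀, horth₀⟩ := he t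
        have hgram₀ : IsUnit ((Matrix.of X₀)ᵀ * Matrix.of X₀) :=
          isUnit_gram_of_rank _ hrank₀
        have hdet₀ : ((Matrix.of X₀)ᵀ * Matrix.of X₀).det ≠ 0 :=
          isUnit_iff_ne_zero.mp ((Matrix.isUnit_iff_isUnit_det _).mp hgram₀)
        -- the quadratic form vanishes at X₀
        have hfX₀ : v ⬝ᵥ (Mx X₀ *ᵥ v) = 0 := by
          by_contra hne
          have hfpos : 0 < v ⬝ᵥ (Mx X₀ *ᵥ v) := lt_of_le_of_ne (hf_nonneg v X₀) (Ne.symm hne)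
          set U : Set (Fin m → Fin d → ℝ) := {X | 0 < p X} ∩ S with hUdef
          have hUopen : IsOpen U :=
            (isOpen_lt continuous_const hp_cont).inter
              (isOpen_compl_singleton.preimage hdetc)
          have hfU : ContinuousOn (fun X => v ⬝ᵥ (Mx X *ᵥ v)) U := by
            have : ContinuousOn (fun X => v ⬝ᵥ (Mx X *ᵥ v)) S := by
              have heq : (fun X => v ⬝ᵥ (Mx X *ᵥ v))
                  = fun X => ∑ i, v i * ∑ j, Mx X i j * v j := rfl
              rw [heq]
              exact continuousOn_finset_sum _ fun i _ => continuousOn_const.mul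
                (continuousOn_finset_sum _ fun j _ => (hM_contOn i j).mul continuousOn_const)
            exact this.mono Set.inter_subset_right
          set W : Set (Fin m → Fin d → ℝ) := U ∩ (fun X => v ⬝ᵥ (Mx X *ᵥ v)) ⁻¹' Set.Ioi 0
            with hWdef
          have hWopen : IsOpen W := hfU.isOpen_inter_preimage hUopen isOpen_Ioi
          have hX₀W : X₀ ∈ W := ⟨⟨hpX₀, hdet₀⟩, hfpos⟩
          have hWpos : 0 < volume W := hWopen.measure_pos volume ⟨X₀, hX₀W⟩
          have hWnull : volume W = 0 := by
            refine measure_mono_null ?_ (ae_iff.mp hae)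
            intro X hX
            simp only [Set.mem_setOf_eq]
            push_neg
            refine ⟨?_, ne_of_gt hX.2⟩
            exact (ENNReal.ofReal_pos.mpr hX.1.1).ne'
          exact absurd hWnull (ne_of_gt hWpos)
        -- hence `Mx X₀ *ᵥ v = 0`, i.e. `v` is in the column space of `X₀`
        have hMv : Mx X₀ *ᵥ v = 0 := by
          have h0 : (Mx X₀ *ᵥ v) ⬝ᵥ (Mx X₀ *ᵥ v) = 0 := by
            rw [← symIdem_quadform (hsym X₀) (hidem X₀)]; exact hfX₀
          exact dotProduct_self_eq_zero.mp h0
        have hvP : v = (Matrix.of X₀ * ((Matrix.of X₀)ᵀ * Matrix.of X₀)⁻¹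
            * (Matrix.of X₀)ᵀ) *ᵥ v := by
          have := hMv
          rw [hMx, Matrix.sub_mulVec, Matrix.one_mulVec, sub_eq_zero] at this
          exact this
        calc e t ⬝ᵥ v
            = e t ⬝ᵥ ((Matrix.of X₀ * ((Matrix.of X₀)ᵀ * Matrix.of X₀)⁻¹
                * (Matrix.of X₀)ᵀ) *ᵥ v) := by rw [← hvP]
          _ = (e t ᵥ* (Matrix.of X₀ * ((Matrix.of X₀)ᵀ * Matrix.of X₀)⁻¹
                * (Matrix.of X₀)ᵀ)) ⬝ᵥ v := Matrix.dotProduct_mulVec _ _ _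
          _ = 0 := by
              have h1 : e t ᵥ* Matrix.of X₀ = 0 := by
                rw [← Matrix.mulVec_transpose]; exact horth₀
              rw [← Matrix.vecMul_vecMul, ← Matrix.vecMul_vecMul, h1,
                Matrix.zero_vecMul, Matrix.zero_vecMul, zero_dotProduct]
      -- conclude v = 0, contradiction
      have hvv : v ⬝ᵥ v = 0 := by
        let φ : (Fin m → ℝ) →ₗ[ℝ] ℝ :=
          { toFun := fun w => w ⬝ᵥ v
            map_add' := fun a b => add_dotProduct a b v
            map_smul' := fun c a => smul_dotProduct c a v }
        have hφ : ∀ w, φ w = w ⬝ᵥ v := fun _ => rfl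
        have : φ v = 0 := by
          conv_lhs => rw [← e.sum_repr v]
          rw [map_sum]
          refine Finset.sum_eq_zero fun t _ => ?_
          rw [φ.map_smul, hφ, het t, smul_eq_mul, mul_zero]
        rw [← hφ]; exact this
      exact hv (dotProduct_self_eq_zero.mp hvv)
  -- positive definite implies invertible
  exact hPD.isUnit
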